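/- Let K be a finite simplicial complex with an acyclic partial matching μ : M → M. Then the chain complex Match_*(K, μ) is acyclic, i.e., its homology vanishes in every degree q ≥ 0. -/

import Mathlib

set_option maxSynthPendingDepth 2

/-! Simplicial ℤ/2 chains and homology machinery. -/

/-- Chains with `ℤ/2` coefficients, formal sums of finite subsets of `V`. -/
abbrev Ch (V : Type*) := Finset V →₀ ZMod 2

/-- The simplicial boundary operator: a simplex with at least two vertices is sent
to the sum of its codimension-1 faces; vertices are sent to `0`. -/
noncomputable def bdry (V : Type*) [DecidableEq V] : Ch V →ₗ[ZMod 2] Ch V :=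
  Finsupp.linearCombination (ZMod 2) fun σ : Finset V =>
    if σ.card ≤ 1 then 0 else ∑ v ∈ σ, Finsupp.single (σ.erase v) (1 : ZMod 2)

/-- A simplicial complex: a collection of nonempty finite subsets of `V`
closed under taking nonempty subsets. -/
def IsComplex {V : Type*} (K : Set (Finset V)) : Prop :=
  ∀ σ ∈ K, σ.Nonempty ∧ ∀ τ ⊆ σ, τ.Nonempty → τ ∈ K

/-- The space of chains supported on simplices of `K` with `k` vertices
(i.e. the simplicial chain group of degree `k - 1`). -/
noncomputable def chainCard {V : Type*} [DecidableEq V] (K : Set (Finset V)) (k : ℕ) :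
    Submodule (ZMod 2) (Ch V) :=
  Submodule.span (ZMod 2) {f | ∃ σ ∈ K, σ.card = k ∧ f = Finsupp.single σ 1}

theorem chainCard_mono {V : Type*} [DecidableEq V] {K₁ K₂ : Set (Finset V)}
    (h : K₁ ⊆ K₂) (k : ℕ) : chainCard K₁ k ≤ chainCard K₂ k := by
  apply Submodule.span_mono
  rintro f ⟨σ, hσ, hc, rfl⟩
  exact ⟨σ, h hσ, hc, rfl⟩

/-- Cycles (in cardinality grading `k`, i.e. degree `k-1`) of a chain subcomplex `W`. -/
noncomputable def cyclesOf {V : Type*} [DecidableEq V] (W : ℕ → Submodule (ZMod 2) (Ch V)) (k : ℕ) :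
    Submodule (ZMod 2) (Ch V) :=
  W k ⊓ LinearMap.ker (bdry V)

/-- Boundaries (in cardinality grading `k`, i.e. degree `k-1`) of a chain subcomplex `W`. -/
noncomputable def bdriesOf {V : Type*} [DecidableEq V] (W : ℕ → Submodule (ZMod 2) (Ch V)) (k : ℕ) :
    Submodule (ZMod 2) (Ch V) :=
  Submodule.map (bdry V) (W (k + 1))

/-- Homology of the chain complex `W` in cardinality grading `k` (degree `k - 1`):
cycles modulo boundaries. -/
abbrev homolOf {V : Type*} [DecidableEq V] (W : ℕ → Submodule (ZMod 2) (Ch V)) (k : ℕ) :=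
  ↥(cyclesOf W k) ⧸ (bdriesOf W k).comap (cyclesOf W k).subtype

/-- The map on homology induced by a degreewise inclusion of chain complexes. -/
noncomputable def homolMap {V : Type*} [DecidableEq V]
    (W W' : ℕ → Submodule (ZMod 2) (Ch V)) (h : ∀ k, W k ≤ W' k) (k : ℕ) :
    homolOf W k →ₗ[ZMod 2] homolOf W' k :=
  Submodule.mapQ _ _ (Submodule.inclusion (inf_le_inf (h k) le_rfl))
    (by
      intro x hx
      simp only [Submodule.mem_comap, Submodule.subtype_apply, Submodule.coe_inclusion]
        at hx ⊢
      exact Submodule.map_mono (h (k + 1)) hx)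

/-! Discrete Morse theory: partial matchings, acyclicity, the closure map. -/

/-- `Covers σ τ`: `σ` covers `τ` in the face poset, i.e. `τ ⊆ σ` in codimension one. -/
def Covers {V : Type*} (σ τ : Finset V) : Prop :=
  τ ⊆ σ ∧ σ.card = τ.card + 1

/-- A partial matching: an involution `μ` on a set `M` of simplices matching each
simplex with a simplex that covers it or that it covers. -/
structure PartialMatching (V : Type*) where
  M : Set (Finset V)
  μ : Finset V → Finset V
  mem_M : ∀ σ ∈ M, μ σ ∈ M
  invol : ∀ σ ∈ M, μ (μ σ) = σ
  matched : ∀ σ ∈ M, Covers (μ σ) σ ∨ Covers σ (μ σ)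

/-- Acyclicity of a partial matching: there is no cyclic sequence
`σ₁ ≻ μ(σ₁) ≺ σ₂ ≻ μ(σ₂) ≺ ⋯ ≺ σ_l ≻ μ(σ_l) ≺ σ₁` with `l ≥ 2` and the `σᵢ` distinct. -/
def PartialMatching.Acyclic {V : Type*} (m : PartialMatching V) : Prop :=
  ¬ ∃ (l : ℕ) (f : ℕ → Finset V), 2 ≤ l ∧
      (∀ i < l, ∀ j < l, f i = f j → i = j) ∧
      (∀ i < l, f i ∈ m.M ∧ Covers (f i) (m.μ (f i))) ∧
      (∀ i < l, Covers (f ((i + 1) % l)) (m.μ (f i)))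

/-- `M^↑`: matched simplices lying above their partner. -/
def Mup {V : Type*} (m : PartialMatching V) : Set (Finset V) :=
  {σ | σ ∈ m.M ∧ Covers σ (m.μ σ)}

/-- `M_q^↑` in cardinality grading: elements of `M^↑` with `k` vertices (degree `k-1`). -/
def MupCard {V : Type*} (m : PartialMatching V) (k : ℕ) : Set (Finset V) :=
  {σ | σ ∈ Mup m ∧ σ.card = k}

/-- `R_q(μ)` in cardinality grading: the unmatched (critical) simplices of `K`
with `k` vertices (degree `k-1`). -/
def Rcard {V : Type*} (K : Set (Finset V)) (m : PartialMatching V) (k : ℕ) :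
    Set (Finset V) :=
  {σ | σ ∈ K ∧ σ.card = k ∧ σ ∉ m.M}

/-- `(α, β)` is an edge of the graph `G(μ)`: `μ β` is defined, `β` lies above its
partner, and `α` covers `μ β` (with `β ≠ α`). -/
def IsEdge {V : Type*} (m : PartialMatching V) (α β : Finset V) : Prop :=
  β ≠ α ∧ β ∈ m.M ∧ Covers β (m.μ β) ∧ Covers α (m.μ β)

open scoped Classical in
/-- `φ` is the closure map of the matching `m` on `K`: it satisfies the defining
recursion `φ α = α + ∑ φ β` over the edges `(α, β)` emanating from `α` in `G(μ)`. -/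
def IsClosure {V : Type*} [Fintype V] [DecidableEq V] (K : Set (Finset V))
    (m : PartialMatching V) (φ : Finset V → Ch V) : Prop :=
  ∀ α ∈ K, φ α = Finsupp.single α 1 + ∑ β : Finset V, if IsEdge m α β then φ β else 0

/-- The degree-`(k-1)` chain group of the Morse (critical) complex of `C`:
the span of the closures of the unmatched simplices of `C` with `k` vertices. -/
noncomputable def critWOn {V : Type*} [DecidableEq V] (C : Set (Finset V))
    (m : PartialMatching V) (φ : Finset V → Ch V) (k : ℕ) :
    Submodule (ZMod 2) (Ch V) :=
  Submodule.span (ZMod 2) {f | ∃ γ, γ ∈ C ∧ γ.card = k ∧ γ ∉ m.M ∧ f = φ γ}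

theorem critWOn_mono {V : Type*} [DecidableEq V] {C₁ C₂ : Set (Finset V)}
    (h : C₁ ⊆ C₂) (m : PartialMatching V) (φ : Finset V → Ch V) (k : ℕ) :
    critWOn C₁ m φ k ≤ critWOn C₂ m φ k := by
  apply Submodule.span_mono
  rintro f ⟨γ, hγ, hc, hm, rfl⟩
  exact ⟨γ, h hγ, hc, hm, rfl⟩

/-- The degree-`(k-1)` chain group of the complex `Match`, spanned by `M_{k-1}^↑`
together with the boundaries of the elements of `M_k^↑`. -/
noncomputable def matchW {V : Type*} [DecidableEq V] (m : PartialMatching V) (k : ℕ) :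
    Submodule (ZMod 2) (Ch V) :=
  Submodule.span (ZMod 2)
    ({f | ∃ σ ∈ MupCard m k, f = Finsupp.single σ 1} ∪
      {f | ∃ β ∈ MupCard m (k + 1), f = bdry V (Finsupp.single β 1)})

/-- The set `B_q^R ∪ B_q^↑ ∪ B_q^↓` (in cardinality grading `k = q + 1`). -/
noncomputable def morseBasis {V : Type*} [DecidableEq V] (K : Set (Finset V))
    (m : PartialMatching V) (φ : Finset V → Ch V) (k : ℕ) : Set (Ch V) :=
  {f | ∃ γ ∈ Rcard K m k, f = φ γ} ∪
    ({f | ∃ σ ∈ MupCard m k, f = Finsupp.single σ 1} ∪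
      {f | ∃ β ∈ MupCard m (k + 1), f = bdry V (Finsupp.single β 1)})

/-! ### Auxiliary lemmas for the proof -/

section MatchAux

variable {V : Type*} [DecidableEq V]

instance coversDecidable (σ τ : Finset V) : Decidable (Covers σ τ) :=
  inferInstanceAs (Decidable (τ ⊆ σ ∧ σ.card = τ.card + 1))

lemma zmod2_add_self {M : Type*} [AddCommMonoid M] [Module (ZMod 2) M] (a : M) :
    a + a = 0 := by
  have h : ((2 : ZMod 2)) • a = 0 := by
    rw [show (2 : ZMod 2) = 0 by decide, zero_smul]
  rwa [two_smul] at h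

lemma bdry_single (σ : Finset V) :
    bdry V (Finsupp.single σ 1) =
      if σ.card ≤ 1 then 0 else ∑ v ∈ σ, Finsupp.single (σ.erase v) (1 : ZMod 2) := by
  simp [bdry, Finsupp.linearCombination_single]

lemma bdry_bdry_single (σ : Finset V) :
    bdry V (bdry V (Finsupp.single σ (1 : ZMod 2))) = 0 := by
  rw [bdry_single]
  by_cases h1 : σ.card ≤ 1
  · simp [h1]
  rw [if_neg h1, map_sum]
  by_cases h2 : σ.card ≤ 2
  · refine Finset.sum_eq_zero fun v hv => ?_
    rw [bdry_single, if_pos]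
    have := Finset.card_erase_of_mem hv
    omega
  · have hterm : ∀ v ∈ σ, bdry V (Finsupp.single (σ.erase v) (1 : ZMod 2)) =
        ∑ w ∈ σ.erase v, Finsupp.single ((σ.erase v).erase w) (1 : ZMod 2) := by
      intro v hv
      rw [bdry_single, if_neg]
      have := Finset.card_erase_of_mem hv
      omega
    rw [Finset.sum_congr rfl hterm, Finset.sum_sigma']
    refine Finset.sum_involution (fun p _ => ⟨p.2, p.1⟩) ?_ ?_ ?_ ?_
    · rintro ⟨v, w⟩ hp
      have hw : w ∈ σ.erase v := (Finset.mem_sigma.mp hp).2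
      have : (σ.erase w).erase v = (σ.erase v).erase w := by
        ext x; simp only [Finset.mem_erase]; tauto
      simp only [this]
      exact zmod2_add_self _
    · rintro ⟨v, w⟩ hp _
      intro hcontra
      have hw : w ∈ σ.erase v := (Finset.mem_sigma.mp hp).2
      have hne : w ≠ v := Finset.ne_of_mem_erase hw
      exact hne (congrArg Sigma.fst hcontra)
    · rintro ⟨v, w⟩ hp
      have hv : v ∈ σ := (Finset.mem_sigma.mp hp).1
      have hw : w ∈ σ.erase v := (Finset.mem_sigma.mp hp).2
      refine Finset.mem_sigma.mpr ⟨Finset.mem_of_mem_erase hw, ?_⟩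
      exact Finset.mem_erase.mpr ⟨fun h => Finset.ne_of_mem_erase hw h.symm, hv⟩
    · rintro ⟨v, w⟩ hp
      rfl

lemma bdry_bdry (f : Ch V) : bdry V (bdry V f) = 0 := by
  induction f using Finsupp.induction_linear with
  | zero => simp
  | add f g hf hg => rw [map_add, map_add, hf, hg, add_zero]
  | single a b =>
    have : Finsupp.single a b = b • Finsupp.single a (1 : ZMod 2) := by
      rw [Finsupp.smul_single, smul_eq_mul, mul_one]
    rw [this, map_smul, map_smul, bdry_bdry_single, smul_zero]

/-- Span of the upward-matched simplices in cardinality `k`. -/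
noncomputable def Uspan (m : PartialMatching V) (k : ℕ) : Submodule (ZMod 2) (Ch V) :=
  Submodule.span (ZMod 2) {f | ∃ σ ∈ MupCard m k, f = Finsupp.single σ 1}

lemma Uspan_eq_supported (m : PartialMatching V) (k : ℕ) :
    Uspan m k = Finsupp.supported (ZMod 2) (ZMod 2) (MupCard m k) := by
  rw [Finsupp.supported_eq_span_single, Uspan]
  congr 1
  ext f
  constructor
  · rintro ⟨σ, hσ, rfl⟩; exact ⟨σ, hσ, rfl⟩
  · rintro ⟨σ, hσ, rfl⟩; exact ⟨σ, hσ, rfl⟩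

lemma matchW_eq (m : PartialMatching V) (k : ℕ) :
    matchW m k = Uspan m k ⊔ Submodule.map (bdry V) (Uspan m (k + 1)) := by
  rw [matchW, Submodule.span_union]
  congr 1
  rw [Uspan, Submodule.map_span]
  congr 1
  ext f
  constructor
  · rintro ⟨β, hβ, rfl⟩; exact ⟨Finsupp.single β 1, ⟨β, hβ, rfl⟩, rfl⟩
  · rintro ⟨g, ⟨β, hβ, rfl⟩, rfl⟩; exact ⟨β, hβ, rfl⟩

lemma card_filter_erase (τ α : Finset V) :
    (τ.filter (fun v => τ.erase v = α)).card = if Covers τ α then 1 else 0 := by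
  by_cases h : Covers τ α
  · rw [if_pos h]
    obtain ⟨hsub, hcard⟩ := h
    have hd : (τ \ α).card = 1 := by
      rw [Finset.card_sdiff_of_subset hsub]; omega
    obtain ⟨v, hv⟩ := Finset.card_eq_one.mp hd
    have hvmem : v ∈ τ \ α := hv ▸ Finset.mem_singleton_self v
    have hvτ : v ∈ τ := (Finset.mem_sdiff.mp hvmem).1
    have hvα : v ∉ α := (Finset.mem_sdiff.mp hvmem).2
    have he : τ.erase v = α := by
      refine (Finset.eq_of_subset_of_card_le ?_ ?_).symm
      · intro x hx
        exact Finset.mem_erase.mpr ⟨fun hxv => hvα (hxv ▸ hx), hsub hx⟩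
      · rw [Finset.card_erase_of_mem hvτ]; omega
    have : τ.filter (fun v => τ.erase v = α) = {v} := by
      apply Finset.eq_singleton_iff_unique_mem.mpr
      refine ⟨Finset.mem_filter.mpr ⟨hvτ, he⟩, ?_⟩
      intro w hw
      obtain ⟨hwτ, hwe⟩ := Finset.mem_filter.mp hw
      by_contra hwv
      have hwα : w ∈ α := he ▸ Finset.mem_erase.mpr ⟨hwv, hwτ⟩
      have : w ∉ α := hwe ▸ Finset.notMem_erase w τ
      exact this hwα
    rw [this, Finset.card_singleton]
  · rw [if_neg h, Finset.card_eq_zero, Finset.filter_eq_empty_iff]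
    intro v hv heq
    apply h
    refine ⟨heq ▸ Finset.erase_subset v τ, ?_⟩
    have h1 : (τ.erase v).card = τ.card - 1 := Finset.card_erase_of_mem hv
    have h2 : 1 ≤ τ.card := Finset.card_pos.mpr ⟨v, hv⟩
    rw [← heq, h1]; omega

lemma bdry_apply_of_supp (u : Ch V) (hs : ∀ τ ∈ u.support, 2 ≤ τ.card) (α : Finset V) :
    bdry V u α = ((u.support.filter (fun τ => Covers τ α)).card : ZMod 2) := by
  have hrw : bdry V u = ∑ τ ∈ u.support, u τ •
      (if τ.card ≤ 1 then (0 : Ch V) else ∑ v ∈ τ, Finsupp.single (τ.erase v) (1 : ZMod 2)) := by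
    rw [bdry, Finsupp.linearCombination_apply, Finsupp.sum]
  have hone : ∀ x : ZMod 2, x ≠ 0 → x = 1 := by decide
  rw [hrw, Finsupp.finset_sum_apply, ← Finset.sum_boole]
  refine Finset.sum_congr rfl fun τ hτ => ?_
  rw [Finsupp.smul_apply, hone (u τ) (Finsupp.mem_support_iff.mp hτ), one_smul,
    if_neg (by have := hs τ hτ; omega)]
  rw [Finsupp.finset_sum_apply]
  have : ∀ v ∈ τ, (Finsupp.single (τ.erase v) (1 : ZMod 2)) α
      = if τ.erase v = α then (1 : ZMod 2) else 0 := by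
    intro v _; rw [Finsupp.single_apply]
  rw [Finset.sum_congr rfl this, Finset.sum_boole, card_filter_erase]
  split <;> simp

lemma two_le_card_of_mem_Mup {K : Set (Finset V)} (hK : IsComplex K)
    {m : PartialMatching V} (hMK : m.M ⊆ K) {σ : Finset V} (hσ : σ ∈ Mup m) :
    2 ≤ σ.card := by
  obtain ⟨hM, hsub, hcard⟩ := hσ
  have h2 : (m.μ σ).Nonempty := (hK _ (hMK (m.mem_M σ hM))).1
  have := Finset.card_pos.mpr h2
  omega

lemma bdry_ker_Mup {K : Set (Finset V)} (hK : IsComplex K) {m : PartialMatching V}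
    (hMK : m.M ⊆ K) (hac : m.Acyclic) [Fintype V] (u : Ch V)
    (hsupp : ↑u.support ⊆ Mup m) (hbd : bdry V u = 0) : u = 0 := by
  by_contra hne
  obtain ⟨σ0, hσ0⟩ := Finsupp.support_nonempty_iff.mpr hne
  have hcard2 : ∀ τ ∈ u.support, 2 ≤ τ.card :=
    fun τ h => two_le_card_of_mem_Mup hK hMK (hsupp h)
  have claim : ∀ σ ∈ u.support, ∃ σ', σ' ∈ u.support ∧ σ' ≠ σ ∧ Covers σ' (m.μ σ) := by
    intro σ hσ
    have hcov : Covers σ (m.μ σ) := (hsupp hσ).2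
    have h0 : ((u.support.filter (fun τ => Covers τ (m.μ σ))).card : ZMod 2) = 0 := by
      rw [← bdry_apply_of_supp u hcard2 (m.μ σ), hbd]; rfl
    by_contra hno
    push_neg at hno
    have hsingle : u.support.filter (fun τ => Covers τ (m.μ σ)) = {σ} := by
      apply Finset.eq_singleton_iff_unique_mem.mpr
      refine ⟨Finset.mem_filter.mpr ⟨hσ, hcov⟩, ?_⟩
      intro x hx
      obtain ⟨hx1, hx2⟩ := Finset.mem_filter.mp hx
      by_contra hxne
      exact hno x hx1 hxne hx2
    rw [hsingle, Finset.card_singleton] at h0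
    exact one_ne_zero h0
  choose! succ hmem hne' hcov using claim
  let g : ℕ → Finset V := fun n => succ^[n] σ0
  have hgs : ∀ n, g (n + 1) = succ (g n) := fun n => Function.iterate_succ_apply' succ n σ0
  have hgmem : ∀ n, g n ∈ u.support := by
    intro n
    induction n with
    | zero => exact hσ0
    | succ n ih => rw [hgs]; exact hmem _ ih
  have hrep : ∃ j, ∃ i, i < j ∧ g i = g j := by
    obtain ⟨a, b, hab, heqab⟩ := Finite.exists_ne_map_eq_of_infinite g
    rcases hab.lt_or_gt with h | h
    · exact ⟨b, a, h, heqab⟩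
    · exact ⟨a, b, h, heqab.symm⟩
  classical
  obtain ⟨i, hij, heq⟩ := Nat.find_spec hrep
  set j := Nat.find hrep with hjdef
  have hinj : ∀ a b, a < b → b < j → g a ≠ g b := by
    intro a b hab hbj habeq
    exact Nat.find_min hrep hbj ⟨a, hab, habeq⟩
  set l := j - i with hl
  have hl2 : 2 ≤ l := by
    rcases Nat.lt_or_ge l 2 with h | h
    · exfalso
      have hl1 : l = 1 := by omega
      have hj1 : j = i + 1 := by omega
      apply hne' (g i) (hgmem i)
      rw [← hgs, ← hj1, ← heq]
    · exact h
  apply hac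
  refine ⟨l, fun n => g (i + n), hl2, ?_, ?_, ?_⟩
  · intro a ha b hb hfeq
    by_contra hne2
    rcases Nat.lt_or_ge a b with h | h
    · exact hinj (i + a) (i + b) (by omega) (by omega) hfeq
    · exact hinj (i + b) (i + a) (by omega) (by omega) hfeq.symm
  · intro n _
    exact hsupp (hgmem (i + n))
  · intro n hn
    have hcn : Covers (succ (g (i + n))) (m.μ (g (i + n))) := hcov _ (hgmem (i + n))
    rw [← hgs] at hcn
    show Covers (g (i + (n + 1) % l)) (m.μ (g (i + n)))
    by_cases h : n + 1 < l
    · rw [Nat.mod_eq_of_lt h]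
      exact hcn
    · have hn1 : n + 1 = l := by omega
      rw [hn1, Nat.mod_self]
      have hjeq : i + n + 1 = j := by omega
      have hge : g (i + 0) = g (i + n + 1) := by
        rw [hjeq, add_zero, heq]
      rw [hge]
      exact hcn

end MatchAux

/-- For a finite simplicial complex `K` with an acyclic partial matching
`μ`, the chain complex `Match_*(K, μ)` is acyclic: its homology vanishes in every
degree `q ≥ 0`. -/
theorem matchW_homology_trivial {V : Type*} [Fintype V] [DecidableEq V]
    (K : Set (Finset V)) (hK : IsComplex K)
    (m : PartialMatching V) (hMK : m.M ⊆ K) (hac : m.Acyclic) :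
    ∀ q : ℕ, Subsingleton (homolOf (matchW m) (q + 1)) := by
  intro q
  set k := q + 1 with hk
  rw [Submodule.Quotient.subsingleton_iff, Submodule.eq_top_iff']
  intro x
  rw [Submodule.mem_comap, Submodule.subtype_apply]
  obtain ⟨z, hzW, hzker⟩ := x
  show z ∈ bdriesOf (matchW m) k
  rw [matchW_eq] at hzW
  obtain ⟨u, hu, b, hb, rfl⟩ := Submodule.mem_sup.mp hzW
  obtain ⟨w, hw, rfl⟩ := hb
  have hbu : bdry V u = 0 := by
    have h0 : bdry V (u + bdry V w) = 0 := hzker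
    rwa [map_add, bdry_bdry, add_zero] at h0
  have husupp : ↑u.support ⊆ Mup m := by
    rw [Uspan_eq_supported, Finsupp.mem_supported] at hu
    exact hu.trans fun σ hσ => hσ.1
  have hu0 : u = 0 := bdry_ker_Mup hK hMK hac u husupp hbu
  rw [hu0, zero_add]
  refine ⟨w, ?_, rfl⟩
  rw [matchW_eq]
  exact Submodule.mem_sup_left hw
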